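/- Let G ∈ ℚ⟦x,y⟧ be a formal power series in two variables satisfying G = 1 + x·y·G + x·G³. Then for all n ≥ 0 and 0 ≤ k ≤ n, (2n - 2k + 1) · [x^n y^k] G = binom(3n-2k, k) · binom(3n-3k, n-k), and [x^n y^k] G = 0 for k > n. That is, the ternary analogue matrix has general term binom(3n-2k,k)·binom(3n-3k,n-k)/(2n-2k+1). -/

import Mathlib

open Finset MvPowerSeries

namespace Stmt14

/-- Fuss ballot numbers (b=3): `Q k r = C(r+3k,k) - 3·C(r+3k-1,k-1)`. -/
def Q : ℕ → ℕ → ℚ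
  | 0, _ => 1
  | (k+1), r => ((r+3*k+3).choose (k+1) : ℚ) - 3 * ((r+3*k+2).choose k : ℚ)

@[simp] lemma Q_zero (r : ℕ) : Q 0 r = 1 := rfl

lemma Q_succ (k r : ℕ) :
    Q (k+1) r = ((r+3*k+3).choose (k+1) : ℚ) - 3 * ((r+3*k+2).choose k : ℚ) := rfl

/-- `C(3k+3, k+1) = 3 C(3k+2, k)`. -/
lemma three_mul_choose (k : ℕ) : (3*k+3).choose (k+1) = 3 * ((3*k+2).choose k) := by
  apply Nat.eq_of_mul_eq_mul_left (show 0 < k+1 by omega)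
  have h := Nat.add_one_mul_choose_eq (3*k+2) k
  rw [show 3*k+2+1 = 3*k+3 from by omega] at h
  calc (k+1) * ((3*k+3).choose (k+1)) = (3*k+3).choose (k+1) * (k+1) := by ring
    _ = (3*k+3) * ((3*k+2).choose k) := h.symm
    _ = (k+1) * (3 * ((3*k+2).choose k)) := by ring

@[simp] lemma Q_succ_zero (k : ℕ) : Q (k+1) 0 = 0 := by
  rw [Q_succ]
  rw [show 0+3*k+3 = 3*k+3 from by omega, show 0+3*k+2 = 3*k+2 from by omega,
    three_mul_choose k]
  push_cast; ring

/-- Pascal-type recurrence for `Q`. -/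
lemma Q_pascal (k r : ℕ) : Q (k+1) (r+1) = Q (k+1) r + Q k (r+3) := by
  cases k with
  | zero =>
      simp only [Q_succ, Q_zero]
      rw [show r+1+3*0+3 = r+4 from by omega, show r+1+3*0+2 = r+3 from by omega,
        show r+3*0+3 = r+3 from by omega, show r+3*0+2 = r+2 from by omega]
      simp [Nat.choose_one_right]
      ring
  | succ k =>
      simp only [Q_succ]
      rw [show r+1+3*(k+1)+3 = r+3*k+7 from by omega,
        show r+1+3*(k+1)+2 = r+3*k+6 from by omega,
        show r+3*(k+1)+3 = r+3*k+6 from by omega,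
        show r+3*(k+1)+2 = r+3*k+5 from by omega,
        show r+3+3*k+3 = r+3*k+6 from by omega,
        show r+3+3*k+2 = r+3*k+5 from by omega]
      have h1 : (r+3*k+7).choose (k+2) = (r+3*k+6).choose (k+1) + (r+3*k+6).choose (k+2) := by
        rw [show r+3*k+7 = (r+3*k+6)+1 from by omega]
        exact Nat.choose_succ_succ _ _
      have h2 : (r+3*k+6).choose (k+1) = (r+3*k+5).choose k + (r+3*k+5).choose (k+1) := by
        rw [show r+3*k+6 = (r+3*k+5)+1 from by omega]
        exact Nat.choose_succ_succ _ _
      rw [h1, h2]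
      push_cast; ring

/-- Rothe's identity. -/
lemma rothe : ∀ n r s : ℕ,
    ∑ k ∈ range (n+1), Q k r * (((s+3*(n-k)).choose (n-k) : ℕ) : ℚ)
      = (((r+s+3*n).choose n : ℕ) : ℚ) := by
  intro n
  induction n with
  | zero => intro r s; simp
  | succ n ih =>
      intro r
      induction r with
      | zero =>
          intro s
          rw [Finset.sum_eq_single 0]
          · simp
          · intro k hk hk0
            obtain ⟨k', rfl⟩ := Nat.exists_eq_succ_of_ne_zero hk0
            simp [Q_succ_zero]
          · intro h; simp at h
      | succ r ihr =>
          intro s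
          have hsplit : ∀ k ∈ range (n+1),
              Q (k+1) (r+1) * (((s+3*(n+1-(k+1))).choose (n+1-(k+1)) : ℕ) : ℚ)
              = Q (k+1) r * (((s+3*(n+1-(k+1))).choose (n+1-(k+1)) : ℕ) : ℚ)
                + Q k (r+3) * (((s+3*(n-k)).choose (n-k) : ℕ) : ℚ) := by
            intro k hk
            simp only [mem_range] at hk
            rw [show n+1-(k+1) = n-k from by omega, Q_pascal, add_mul]
          rw [Finset.sum_range_succ' _ (n+1), Finset.sum_congr rfl hsplit,
            Finset.sum_add_distrib]
          have h2 := Finset.sum_range_succ'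
            (fun k => Q k r * (((s+3*(n+1-k)).choose (n+1-k) : ℕ) : ℚ)) (n+1)
          have h3 := ihr s
          have h4 := ih (r+3) s
          have h5 : (((r+1+s+3*(n+1)).choose (n+1) : ℕ) : ℚ)
              = (((r+s+3*(n+1)).choose (n+1) : ℕ) : ℚ) + (((r+3+s+3*n).choose n : ℕ) : ℚ) := by
            rw [show r+1+s+3*(n+1) = (r+s+3*(n+1))+1 from by omega,
              show r+3+s+3*n = r+s+3*(n+1) from by omega,
              Nat.choose_succ_succ (r+s+3*(n+1)) n]
            push_cast; ring
          simp only [Q_zero] at h2 ⊢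
          linarith [h2, h3, h4, h5]


/-- Rothe–Hagen convolution. -/
lemma rothe_hagen (n r s : ℕ) :
    ∑ k ∈ range (n+1), Q k r * Q (n-k) s = Q n (r+s) := by
  cases n with
  | zero => simp
  | succ m =>
    have hterm : ∀ k ∈ range (m+1+1),
        Q k r * Q (m+1-k) s
        = Q k r * (((s+3*(m+1-k)).choose (m+1-k) : ℕ) : ℚ)
          - 3 * (Q k r * (if k ≤ m then ((((s+2)+3*(m-k)).choose (m-k) : ℕ) : ℚ) else 0)) := by
      intro k hk
      simp only [mem_range] at hk
      by_cases h : k ≤ m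
      · rw [if_pos h, show m+1-k = (m-k)+1 from by omega, Q_succ,
          show s+3*((m-k)+1) = s+3*(m-k)+3 from by omega,
          show (s+2)+3*(m-k) = s+3*(m-k)+2 from by omega]
        ring
      · rw [if_neg h, show m+1-k = 0 from by omega]
        simp
    rw [Finset.sum_congr rfl hterm, Finset.sum_sub_distrib, rothe (m+1) r s,
      Finset.sum_range_succ]
    rw [if_neg (by omega : ¬ m+1 ≤ m), mul_zero, mul_zero, add_zero]
    have : ∀ k ∈ range (m+1),
        3 * (Q k r * (if k ≤ m then ((((s+2)+3*(m-k)).choose (m-k) : ℕ) : ℚ) else 0))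
        = 3 * (Q k r * ((((s+2)+3*(m-k)).choose (m-k) : ℕ) : ℚ)) := by
      intro k hk; simp only [mem_range] at hk; rw [if_pos (by omega)]
    rw [Finset.sum_congr rfl this, ← Finset.mul_sum, rothe m r (s+2), Q_succ,
      show r+s+3*m+3 = r+s+3*(m+1) from by omega,
      show r+s+3*m+2 = r+(s+2)+3*m from by omega]

/-- Hockey stick. -/
lemma hockey (a : ℕ) : ∀ k, ∑ i ∈ range (k+1), (a+i).choose a = (a+1+k).choose k := by
  intro k
  induction k with
  | zero => simp
  | succ k ih =>
      rw [Finset.sum_range_succ, ih]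
      have hp : (a+1+(k+1)).choose (k+1) = (a+1+k).choose k + (a+1+k).choose (k+1) := by
        rw [show a+1+(k+1) = (a+1+k)+1 from by omega]
        exact Nat.choose_succ_succ' _ _
      have h2 : (a+(k+1)).choose a = (a+1+k).choose (k+1) := by
        have h := (Nat.choose_symm (show a ≤ a+(k+1) from by omega)).symm
        rw [show a+(k+1)-a = k+1 from by omega] at h
        rw [h]; congr 1; omega
      rw [h2, hp]

/-- Vandermonde variant. -/
lemma vande2 (b : ℕ) : ∀ k a : ℕ,
    (∑ i ∈ range (k+1), (a+i).choose i * ((b+(k-i)).choose (k-i))) = (a+b+1+k).choose k := by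
  induction b with
  | zero =>
      intro k a
      have h1 : ∀ i ∈ range (k+1),
          (a+i).choose i * ((0+(k-i)).choose (k-i)) = (a+i).choose a := by
        intro i _
        rw [zero_add, Nat.choose_self, mul_one]
        have := Nat.choose_symm (show i ≤ a+i from by omega)
        rw [show a+i-i = a from by omega] at this
        exact this.symm
      rw [Finset.sum_congr rfl h1, hockey a k, show a+0+1+k = a+1+k from by omega]
  | succ b ihb =>
      intro k
      induction k with
      | zero => intro a; simp
      | succ k ihk =>
          intro a
          have hterm : ∀ i ∈ range (k+1),
              (a+i).choose i * ((b+1+(k+1-i)).choose (k+1-i))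
              = (a+i).choose i * ((b+(k+1-i)).choose (k+1-i))
                + (a+i).choose i * ((b+1+(k-i)).choose (k-i)) := by
            intro i hi
            simp only [mem_range] at hi
            obtain ⟨j, hj⟩ : ∃ j, k - i = j := ⟨k-i, rfl⟩
            rw [show k+1-i = j+1 from by omega, hj,
              show b+1+(j+1) = (b+1+j)+1 from by omega,
              Nat.choose_succ_succ' (b+1+j) j,
              show b+1+j = b+(j+1) from by omega, Nat.mul_add]
            ring
          rw [Finset.sum_range_succ, Finset.sum_congr rfl hterm, Finset.sum_add_distrib, ihk a]
          have hS : (∑ i ∈ range (k+1), (a+i).choose i * ((b+(k+1-i)).choose (k+1-i)))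
                + (a+(k+1)).choose (k+1) * ((b+1+(k+1-(k+1))).choose (k+1-(k+1)))
              = (a+b+1+(k+1)).choose (k+1) := by
            rw [← ihb (k+1) a,
              Finset.sum_range_succ (fun i => (a+i).choose i * ((b+(k+1-i)).choose (k+1-i))) (k+1)]
            simp
          rw [add_right_comm, hS]
          have h2 : (a+(b+1)+1+k).choose (k+1) = (a+b+1+(k+1)).choose (k+1) := by
            congr 1; omega
          have hp : (a+(b+1)+1+(k+1)).choose (k+1)
              = (a+(b+1)+1+k).choose k + (a+b+1+(k+1)).choose (k+1) := by
            rw [show a+(b+1)+1+(k+1) = (a+(b+1)+1+k)+1 from by omega,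
              Nat.choose_succ_succ' (a+(b+1)+1+k) k, h2]
          rw [hp]
          omega

/-- The two-parameter coefficient family. -/
noncomputable def e (u r : ℕ) (n k : ℕ) : ℚ :=
  if k ≤ n then (((3*(n-k)+k+u).choose k : ℕ) : ℚ) * Q (n-k) r else 0

lemma sum_shift (f : ℕ → ℚ) (n a b : ℕ) (hab : a + b ≤ n)
    (h0 : ∀ i, i < a → f i = 0) (h1 : ∀ i, a + b < i → i ≤ n → f i = 0) :
    ∑ i ∈ range (n+1), f i = ∑ p ∈ range (b+1), f (a+p) := by
  have h2 : ∑ i ∈ Ico a (a+b+1), f i = ∑ p ∈ range (b+1), f (a+p) := by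
    rw [Finset.sum_Ico_eq_sum_range, show a+b+1-a = b+1 from by omega]
  rw [← h2]
  apply (Finset.sum_subset ?_ ?_).symm
  · intro x hx; simp only [mem_Ico] at hx; simp only [mem_range]; omega
  · intro x hx hx2
    simp only [mem_range] at hx
    simp only [mem_Ico] at hx2
    by_cases hxa : x < a
    · exact h0 _ hxa
    · exact h1 _ (by omega) (by omega)

/-- Convolution closure for `e`. -/
lemma conv (u1 r1 u2 r2 n k : ℕ) :
    ∑ i ∈ range (n+1), ∑ l ∈ range (k+1), e u1 r1 i l * e u2 r2 (n-i) (k-l)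
      = e (u1+u2+1) (r1+r2) n k := by
  by_cases hk : k ≤ n
  · rw [Finset.sum_comm]
    have hstep : ∀ l ∈ range (k+1),
        ∑ i ∈ range (n+1), e u1 r1 i l * e u2 r2 (n-i) (k-l)
        = ∑ p ∈ range ((n-k)+1),
            ((((3*p+l+u1).choose l : ℕ) : ℚ) * Q p r1)
              * ((((3*((n-k)-p)+(k-l)+u2).choose (k-l) : ℕ) : ℚ) * Q ((n-k)-p) r2) := by
      intro l hl
      simp only [mem_range] at hl
      rw [sum_shift _ n l (n-k) (by omega) ?_ ?_]
      · apply Finset.sum_congr rfl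
        intro p hp
        simp only [mem_range] at hp
        simp only [e, if_pos (show l ≤ l + p from by omega),
          if_pos (show k - l ≤ n - (l + p) from by omega)]
        rw [show l + p - l = p from by omega,
          show n - (l + p) - (k - l) = (n-k) - p from by omega]
      · intro i hi
        simp only [e, if_neg (show ¬ l ≤ i from by omega), zero_mul]
      · intro i hi1 hi2
        simp only [e, if_neg (show ¬ k - l ≤ n - i from by omega), mul_zero]
    rw [Finset.sum_congr rfl hstep, Finset.sum_comm]
    have hinner : ∀ p ∈ range ((n-k)+1),
        ∑ l ∈ range (k+1),
            ((((3*p+l+u1).choose l : ℕ) : ℚ) * Q p r1)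
              * ((((3*((n-k)-p)+(k-l)+u2).choose (k-l) : ℕ) : ℚ) * Q ((n-k)-p) r2)
        = (((3*(n-k)+k+(u1+u2+1)).choose k : ℕ) : ℚ) * (Q p r1 * Q ((n-k)-p) r2) := by
      intro p hp
      simp only [mem_range] at hp
      have hv : ((∑ l ∈ range (k+1),
            ((3*p+u1)+l).choose l * (((3*((n-k)-p)+u2)+(k-l)).choose (k-l)) : ℕ) : ℚ)
          = ((((3*p+u1)+(3*((n-k)-p)+u2)+1+k).choose k : ℕ) : ℚ) := by
        exact_mod_cast congrArg (fun t : ℕ => (t : ℚ)) (vande2 (3*((n-k)-p)+u2) k (3*p+u1))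
      push_cast at hv
      calc ∑ l ∈ range (k+1),
            ((((3*p+l+u1).choose l : ℕ) : ℚ) * Q p r1)
              * ((((3*((n-k)-p)+(k-l)+u2).choose (k-l) : ℕ) : ℚ) * Q ((n-k)-p) r2)
          = ∑ l ∈ range (k+1),
            ((((3*p+u1)+l).choose l : ℕ) : ℚ)
              * ((((3*((n-k)-p)+u2)+(k-l)).choose (k-l) : ℕ) : ℚ)
              * (Q p r1 * Q ((n-k)-p) r2) := by
            apply Finset.sum_congr rfl
            intro l hl
            rw [show 3*p+l+u1 = 3*p+u1+l from by omega,
              show 3*((n-k)-p)+(k-l)+u2 = 3*((n-k)-p)+u2+(k-l) from by omega]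
            ring
        _ = (∑ l ∈ range (k+1),
            ((((3*p+u1)+l).choose l : ℕ) : ℚ)
              * ((((3*((n-k)-p)+u2)+(k-l)).choose (k-l) : ℕ) : ℚ))
              * (Q p r1 * Q ((n-k)-p) r2) := by rw [← Finset.sum_mul]
        _ = (((3*(n-k)+k+(u1+u2+1)).choose k : ℕ) : ℚ) * (Q p r1 * Q ((n-k)-p) r2) := by
            rw [hv, show 3*p+u1+(3*((n-k)-p)+u2)+1+k = 3*(n-k)+k+(u1+u2+1) from by omega]
    rw [Finset.sum_congr rfl hinner, ← Finset.mul_sum, rothe_hagen (n-k) r1 r2]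
    simp only [e, if_pos hk]
  · simp only [e, if_neg hk]
    apply Finset.sum_eq_zero
    intro i hi
    apply Finset.sum_eq_zero
    intro l hl
    simp only [mem_range] at hi hl
    by_cases h1 : l ≤ i
    · by_cases h2 : k - l ≤ n - i
      · omega
      · rw [if_neg h2, mul_zero]
    · rw [if_neg h1, zero_mul]

lemma Q3 (M : ℕ) : Q M 3 = Q (M+1) 1 := by
  cases M with
  | zero => norm_num [Q_succ]
  | succ M =>
      rw [Q_succ, Q_succ]
      rw [show 3+3*M+3 = 3*M+6 from by omega, show 3+3*M+2 = 3*M+5 from by omega,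
        show 1+3*(M+1)+3 = 3*M+7 from by omega, show 1+3*(M+1)+2 = 3*M+6 from by omega]
      have h1 : ((3*M+7).choose (M+2) : ℚ)
          = ((3*M+6).choose (M+1) : ℚ) + ((3*M+6).choose (M+2) : ℚ) := by
        rw [show 3*M+7 = (3*M+6)+1 from by omega]
        exact_mod_cast congrArg (fun t : ℕ => (t : ℚ)) (Nat.choose_succ_succ' (3*M+6) (M+1))
      have h2 : ((3*M+6).choose (M+1) : ℚ)
          = ((3*M+5).choose M : ℚ) + ((3*M+5).choose (M+1) : ℚ) := by
        rw [show 3*M+6 = (3*M+5)+1 from by omega]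
        exact_mod_cast congrArg (fun t : ℕ => (t : ℚ)) (Nat.choose_succ_succ' (3*M+5) M)
      have h3 : ((3*M+6).choose (M+2) : ℚ) = 3 * ((3*M+5).choose (M+1) : ℚ) := by
        have := three_mul_choose (M+1)
        rw [show 3*(M+1)+3 = 3*M+6 from by omega, show 3*(M+1)+2 = 3*M+5 from by omega] at this
        exact_mod_cast congrArg (fun t : ℕ => (t : ℚ)) this
      linarith

lemma Qval (m : ℕ) : (2*(m:ℚ)+1) * Q m 1 = ((3*m).choose m : ℚ) := by
  cases m with
  | zero => norm_num
  | succ m =>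
      rw [Q_succ, show 1+3*m+3 = 3*m+4 from by omega, show 1+3*m+2 = 3*m+3 from by omega]
      have hi : ((3*m+4 : ℕ) : ℚ) * ((3*m+3).choose m : ℚ)
          = ((3*m+4).choose (m+1) : ℚ) * ((m:ℚ)+1) := by
        have := Nat.add_one_mul_choose_eq (3*m+3) m
        rw [show 3*m+3+1 = 3*m+4 from by omega] at this
        exact_mod_cast congrArg (fun t : ℕ => (t : ℚ)) this
      have hii : ((3*m+3).choose (m+1) : ℚ) * ((m:ℚ)+1)
          = ((3*m+3).choose m : ℚ) * (2*(m:ℚ)+3) := by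
        have := Nat.choose_succ_right_eq (3*m+3) m
        rw [show 3*m+3-m = 2*m+3 from by omega] at this
        exact_mod_cast congrArg (fun t : ℕ => (t : ℚ)) this
      have hne : ((m:ℚ)+1) ≠ 0 := by positivity
      apply mul_left_cancel₀ hne
      rw [show 3*(m+1) = 3*m+3 from by omega]
      push_cast at hi hii ⊢
      linear_combination (-(2*(m:ℚ)+3)) * hi - hii

lemma FI (n k : ℕ) :
    e 0 1 n k
      = (if n = 0 ∧ k = 0 then 1 else 0)
        + (if 1 ≤ n ∧ 1 ≤ k then e 0 1 (n-1) (k-1) else 0)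
        + (if 1 ≤ n then e 2 3 (n-1) k else 0) := by
  cases n with
  | zero =>
      rw [if_neg (by omega : ¬ (1 ≤ 0 ∧ 1 ≤ k)), if_neg (by omega : ¬ 1 ≤ 0)]
      by_cases hk : k = 0
      · subst hk; simp [e]
      · rw [if_neg (by simp [hk])]
        simp only [e, if_neg (by omega : ¬ k ≤ 0)]
        ring
  | succ m =>
      rw [if_neg (by omega : ¬ ((m+1) = 0 ∧ k = 0)), if_pos (by omega : 1 ≤ m+1),
        show m+1-1 = m from rfl, zero_add]
      by_cases hk : 1 ≤ k
      · rw [if_pos (by exact ⟨by omega, hk⟩)]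
        obtain ⟨j, rfl⟩ : ∃ j, k = j+1 := ⟨k-1, by omega⟩
        rw [show j+1-1 = j from rfl]
        by_cases h2 : j+1 ≤ m
        · obtain ⟨M, hM⟩ : ∃ M, m - (j+1) = M := ⟨m-(j+1), rfl⟩
          simp only [e, if_pos (show j+1 ≤ m+1 from by omega), if_pos (show j ≤ m from by omega),
            if_pos h2]
          rw [show m+1-(j+1) = M+1 from by omega, show m-j = M+1 from by omega, hM]
          rw [show 3*(M+1)+(j+1)+0 = 3*M+j+4 from by omega,
            show 3*(M+1)+j+0 = 3*M+j+3 from by omega,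
            show 3*M+(j+1)+2 = 3*M+j+3 from by omega]
          rw [Q3 M]
          have hp : ((3*M+j+4).choose (j+1) : ℚ)
              = ((3*M+j+3).choose j : ℚ) + ((3*M+j+3).choose (j+1) : ℚ) := by
            rw [show 3*M+j+4 = (3*M+j+3)+1 from by omega]
            exact_mod_cast congrArg (fun t : ℕ => (t : ℚ)) (Nat.choose_succ_succ' (3*M+j+3) j)
          rw [hp]
          ring
        · by_cases h3 : j+1 = m+1
          · simp only [e, if_pos (show j+1 ≤ m+1 from by omega), if_pos (show j ≤ m from by omega),
              if_neg (show ¬ j+1 ≤ m from by omega)]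
            rw [show m+1-(j+1) = 0 from by omega, show m-j = 0 from by omega]
            norm_num
          · simp only [e, if_neg (show ¬ j+1 ≤ m+1 from by omega),
              if_neg (show ¬ j ≤ m from by omega), if_neg (show ¬ j+1 ≤ m from by omega)]
            ring
      · have hk0 : k = 0 := by omega
        subst hk0
        rw [if_neg (by omega : ¬ (1 ≤ m+1 ∧ 1 ≤ 0))]
        simp only [e, if_pos (Nat.zero_le (m+1)), if_pos (Nat.zero_le m)]
        simp only [Nat.sub_zero, Nat.choose_zero_right, Nat.cast_one, one_mul]
        rw [Q3 m]
        ring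

/-- index `(n, k)` as a `Fin 2 →₀ ℕ`. -/
noncomputable def d2 (n k : ℕ) : Fin 2 →₀ ℕ := Finsupp.single 0 n + Finsupp.single 1 k

lemma d2_apply0 (n k : ℕ) : d2 n k 0 = n := by
  simp [d2, Finsupp.single_apply]

lemma d2_apply1 (n k : ℕ) : d2 n k 1 = k := by
  simp [d2, Finsupp.single_apply]

lemma fin2 (v : Fin 2 →₀ ℕ) : v = d2 (v 0) (v 1) := by
  ext s
  fin_cases s
  · show v 0 = d2 (v 0) (v 1) 0
    rw [d2_apply0]
  · show v 1 = d2 (v 0) (v 1) 1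
    rw [d2_apply1]

lemma d2_add (i l p q : ℕ) : d2 i l + d2 p q = d2 (i+p) (l+q) := by
  ext s
  fin_cases s
  · show (d2 i l + d2 p q) 0 = d2 (i+p) (l+q) 0
    rw [Finsupp.add_apply, d2_apply0, d2_apply0, d2_apply0]
  · show (d2 i l + d2 p q) 1 = d2 (i+p) (l+q) 1
    rw [Finsupp.add_apply, d2_apply1, d2_apply1, d2_apply1]

lemma d2_inj {a b c d : ℕ} (h : d2 a b = d2 c d) : a = c ∧ b = d := by
  constructor
  · have := congrArg (fun v : Fin 2 →₀ ℕ => v 0) h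
    simpa [d2_apply0] using this
  · have := congrArg (fun v : Fin 2 →₀ ℕ => v 1) h
    simpa [d2_apply1] using this

/-- coefficient of a product as a double range sum. -/
lemma mulcoeff (f g : MvPowerSeries (Fin 2) ℚ) (n k : ℕ) :
    coeff (d2 n k) (f * g)
      = ∑ i ∈ range (n+1), ∑ l ∈ range (k+1),
          coeff (d2 i l) f * coeff (d2 (n-i) (k-l)) g := by
  rw [MvPowerSeries.coeff_mul]
  rw [← Finset.sum_product']
  refine (Finset.sum_nbij' (fun x : (ℕ × ℕ) => (d2 x.1 x.2, d2 (n - x.1) (k - x.2)))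
    (fun p : (Fin 2 →₀ ℕ) × (Fin 2 →₀ ℕ) => (p.1 0, p.1 1)) ?_ ?_ ?_ ?_ ?_).symm
  · intro x hx
    simp only [mem_product, mem_range] at hx
    rw [Finset.HasAntidiagonal.mem_antidiagonal, d2_add]
    congr 1 <;> omega
  · intro p hp
    rw [Finset.HasAntidiagonal.mem_antidiagonal] at hp
    have h0 := congrArg (fun v : Fin 2 →₀ ℕ => v 0) hp
    have h1 := congrArg (fun v : Fin 2 →₀ ℕ => v 1) hp
    simp only [Finsupp.add_apply, d2_apply0, d2_apply1] at h0 h1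
    simp only [mem_product, mem_range]
    omega
  · intro x hx
    simp only [mem_product, mem_range] at hx
    simp [d2_apply0, d2_apply1]
  · intro p hp
    rw [Finset.HasAntidiagonal.mem_antidiagonal] at hp
    have h0 := congrArg (fun v : Fin 2 →₀ ℕ => v 0) hp
    have h1 := congrArg (fun v : Fin 2 →₀ ℕ => v 1) hp
    simp only [Finsupp.add_apply, d2_apply0, d2_apply1] at h0 h1
    have hp1 : p.1 = d2 (p.1 0) (p.1 1) := fin2 p.1
    have hp2 : p.2 = d2 (p.2 0) (p.2 1) := fin2 p.2
    have : (p.1 0, p.1 1) = ((p.1 0 : ℕ), (p.1 1 : ℕ)) := rfl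
    refine Prod.ext ?_ ?_
    · exact hp1.symm
    · show d2 (n - p.1 0) (k - p.1 1) = p.2
      rw [show n - p.1 0 = p.2 0 from by omega, show k - p.1 1 = p.2 1 from by omega]
      exact hp2.symm
  · intro x hx
    simp only [mem_product, mem_range] at hx
    simp [d2_apply0, d2_apply1]

lemma sub_single0 (n k : ℕ) : d2 n k - Finsupp.single 0 1 = d2 (n-1) k := by
  ext s
  fin_cases s
  · show ((d2 n k - Finsupp.single 0 1 : Fin 2 →₀ ℕ)) 0 = d2 (n-1) k 0
    rw [Finsupp.tsub_apply, d2_apply0, d2_apply0, Finsupp.single_eq_same]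
  · show ((d2 n k - Finsupp.single 0 1 : Fin 2 →₀ ℕ)) 1 = d2 (n-1) k 1
    rw [Finsupp.tsub_apply, d2_apply1, d2_apply1, Finsupp.single_apply,
      if_neg (by decide : ¬ ((0 : Fin 2) = 1))]
    omega

lemma sub_single1 (n k : ℕ) : d2 n k - Finsupp.single 1 1 = d2 n (k-1) := by
  ext s
  fin_cases s
  · show ((d2 n k - Finsupp.single 1 1 : Fin 2 →₀ ℕ)) 0 = d2 n (k-1) 0
    rw [Finsupp.tsub_apply, d2_apply0, d2_apply0, Finsupp.single_apply,
      if_neg (by decide : ¬ ((1 : Fin 2) = 0))]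
    omega
  · show ((d2 n k - Finsupp.single 1 1 : Fin 2 →₀ ℕ)) 1 = d2 n (k-1) 1
    rw [Finsupp.tsub_apply, d2_apply1, d2_apply1, Finsupp.single_eq_same]

/-- coefficient of `X 0 * f`. -/
lemma coeffXmul (f : MvPowerSeries (Fin 2) ℚ) (n k : ℕ) :
    coeff (d2 n k) (X 0 * f)
      = if 1 ≤ n then coeff (d2 (n-1) k) f else 0 := by
  rw [show (X 0 : MvPowerSeries (Fin 2) ℚ) = monomial (Finsupp.single 0 1) 1 from rfl,
    MvPowerSeries.coeff_monomial_mul]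
  by_cases h : 1 ≤ n
  · rw [if_pos, if_pos h, one_mul, sub_single0]
    rw [Finsupp.single_le_iff, d2_apply0]
    exact h
  · rw [if_neg, if_neg h]
    intro hc
    rw [Finsupp.single_le_iff, d2_apply0] at hc
    exact h hc

/-- coefficient of `X 1 * f`. -/
lemma coeffX1mul (f : MvPowerSeries (Fin 2) ℚ) (n k : ℕ) :
    coeff (d2 n k) (X 1 * f)
      = if 1 ≤ k then coeff (d2 n (k-1)) f else 0 := by
  rw [show (X 1 : MvPowerSeries (Fin 2) ℚ) = monomial (Finsupp.single 1 1) 1 from rfl,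
    MvPowerSeries.coeff_monomial_mul]
  by_cases h : 1 ≤ k
  · rw [if_pos, if_pos h, one_mul, sub_single1]
    rw [Finsupp.single_le_iff, d2_apply1]
    exact h
  · rw [if_neg, if_neg h]
    intro hc
    rw [Finsupp.single_le_iff, d2_apply1] at hc
    exact h hc

/-- coefficient of `X 0 * X 1 * f`. -/
lemma coeffXXmul (f : MvPowerSeries (Fin 2) ℚ) (n k : ℕ) :
    coeff (d2 n k) (X 0 * X 1 * f)
      = if 1 ≤ n ∧ 1 ≤ k then coeff (d2 (n-1) (k-1)) f else 0 := by
  rw [mul_assoc, coeffXmul]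
  by_cases h : 1 ≤ n
  · rw [if_pos h, coeffX1mul]
    by_cases h2 : 1 ≤ k
    · rw [if_pos h2, if_pos ⟨h, h2⟩]
    · rw [if_neg h2, if_neg (by tauto)]
  · rw [if_neg h, if_neg (by tauto)]

/-- coefficient of `1`. -/
lemma coeffone (n k : ℕ) :
    coeff (d2 n k) (1 : MvPowerSeries (Fin 2) ℚ) = if n = 0 ∧ k = 0 then 1 else 0 := by
  rw [MvPowerSeries.coeff_one]
  by_cases h : n = 0 ∧ k = 0
  · rw [if_pos h, if_pos]
    rw [h.1, h.2]
    ext s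
    fin_cases s
    · show d2 0 0 0 = 0
      rw [d2_apply0]
    · show d2 0 0 1 = 0
      rw [d2_apply1]
  · rw [if_neg h, if_neg]
    intro hc
    apply h
    constructor
    · have := congrArg (fun v : Fin 2 →₀ ℕ => v 0) hc
      simpa [d2_apply0] using this
    · have := congrArg (fun v : Fin 2 →₀ ℕ => v 1) hc
      simpa [d2_apply1] using this


lemma cube_coeff (G : MvPowerSeries (Fin 2) ℚ) (N k : ℕ)
    (h : ∀ i l : ℕ, i ≤ N → coeff (d2 i l) G = e 0 1 i l) :
    coeff (d2 N k) (G^3) = e 2 3 N k := by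
  rw [show G^3 = G*G*G from by ring, mulcoeff]
  have h1 : ∀ i ∈ range (N+1), ∀ l ∈ range (k+1),
      coeff (d2 i l) (G*G) * coeff (d2 (N-i) (k-l)) G
      = e 1 2 i l * e 0 1 (N-i) (k-l) := by
    intro i hi l hl
    simp only [mem_range] at hi hl
    rw [h (N-i) (k-l) (by omega), mulcoeff]
    congr 1
    calc ∑ i2 ∈ range (i+1), ∑ l2 ∈ range (l+1),
          coeff (d2 i2 l2) G * coeff (d2 (i-i2) (l-l2)) G
        = ∑ i2 ∈ range (i+1), ∑ l2 ∈ range (l+1), e 0 1 i2 l2 * e 0 1 (i-i2) (l-l2) := by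
          apply Finset.sum_congr rfl; intro i2 hi2
          apply Finset.sum_congr rfl; intro l2 hl2
          simp only [mem_range] at hi2 hl2
          rw [h i2 l2 (by omega), h (i-i2) (l-l2) (by omega)]
      _ = e 1 2 i l := by
          have hc := conv 0 1 0 1 i l
          simp only [show (0:ℕ)+0+1 = 1 from rfl, show (1:ℕ)+1 = 2 from rfl] at hc
          exact hc
  calc ∑ i ∈ range (N+1), ∑ l ∈ range (k+1),
        coeff (d2 i l) (G*G) * coeff (d2 (N-i) (k-l)) G
      = ∑ i ∈ range (N+1), ∑ l ∈ range (k+1), e 1 2 i l * e 0 1 (N-i) (k-l) := by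
        apply Finset.sum_congr rfl; intro i hi
        apply Finset.sum_congr rfl; intro l hl
        exact h1 i hi l hl
    _ = e 2 3 N k := by
        have hc := conv 1 2 0 1 N k
        simp only [show (1:ℕ)+0+1 = 2 from rfl, show (2:ℕ)+1 = 3 from rfl] at hc
        exact hc

lemma unique (G : MvPowerSeries (Fin 2) ℚ)
    (hG : G = 1 + X 0 * X 1 * G + X 0 * G^3) :
    ∀ n k : ℕ, coeff (d2 n k) G = e 0 1 n k := by
  intro n
  induction n using Nat.strong_induction_on with
  | _ n IH =>
    intro k
    conv_lhs => rw [hG]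
    rw [map_add, map_add, coeffone, coeffXXmul, coeffXmul, FI n k]
    congr 1
    · congr 1
      by_cases h : 1 ≤ n ∧ 1 ≤ k
      · rw [if_pos h, if_pos h, IH (n-1) (by omega) (k-1)]
      · rw [if_neg h, if_neg h]
    · by_cases h : 1 ≤ n
      · rw [if_pos h, if_pos h]
        exact cube_coeff G (n-1) k (fun i l hi => IH i (by omega) l)
      · rw [if_neg h, if_neg h]

lemma final (G : MvPowerSeries (Fin 2) ℚ)
    (hG : G = 1 + MvPowerSeries.X (0 : Fin 2) * MvPowerSeries.X (1 : Fin 2) * G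
      + MvPowerSeries.X (0 : Fin 2) * G ^ 3) :
    (∀ n k : ℕ, k ≤ n →
      ((2 * n - 2 * k + 1 : ℕ) : ℚ) * MvPowerSeries.coeff
          (Finsupp.single (0 : Fin 2) n + Finsupp.single (1 : Fin 2) k) G
        = ((3 * n - 2 * k).choose k : ℚ) * ((3 * n - 3 * k).choose (n - k) : ℚ)) ∧
    (∀ n k : ℕ, n < k →
      MvPowerSeries.coeff
        (Finsupp.single (0 : Fin 2) n + Finsupp.single (1 : Fin 2) k) G = 0) := by
  have key := unique G hG
  constructor
  · intro n k hkn
    rw [show MvPowerSeries.coeff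
        (Finsupp.single (0 : Fin 2) n + Finsupp.single (1 : Fin 2) k) G = e 0 1 n k
      from key n k]
    obtain ⟨m, hm⟩ : ∃ m, n - k = m := ⟨_, rfl⟩
    simp only [e, if_pos hkn, hm]
    rw [show 2*n-2*k+1 = 2*m+1 from by omega, show 3*n-2*k = 3*m+k from by omega,
      show 3*n-3*k = 3*m from by omega, show 3*m+k+0 = 3*m+k from by omega]
    have hq := Qval m
    push_cast at hq ⊢
    linear_combination (((3*m+k).choose k : ℚ)) * hq
  · intro n k hnk
    rw [show MvPowerSeries.coeff
        (Finsupp.single (0 : Fin 2) n + Finsupp.single (1 : Fin 2) k) G = e 0 1 n k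
      from key n k]
    simp only [e, if_neg (by omega : ¬ k ≤ n)]

end Stmt14

/-- Let `G ∈ ℚ⟦x,y⟧` satisfy `G = 1 + xyG + xG³` (ternary analogue). Then for
`0 ≤ k ≤ n`, `(2n-2k+1)·[x^n y^k]G = C(3n-2k,k)·C(3n-3k,n-k)`, and `[x^n y^k]G = 0` for `k > n`. -/
theorem stmt_14 (G : MvPowerSeries (Fin 2) ℚ)
    (hG : G = 1 + MvPowerSeries.X (0 : Fin 2) * MvPowerSeries.X (1 : Fin 2) * G
      + MvPowerSeries.X (0 : Fin 2) * G ^ 3) :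
    (∀ n k : ℕ, k ≤ n →
      ((2 * n - 2 * k + 1 : ℕ) : ℚ) * MvPowerSeries.coeff
          (Finsupp.single (0 : Fin 2) n + Finsupp.single (1 : Fin 2) k) G
        = ((3 * n - 2 * k).choose k : ℚ) * ((3 * n - 3 * k).choose (n - k) : ℚ)) ∧
    (∀ n k : ℕ, n < k →
      MvPowerSeries.coeff
        (Finsupp.single (0 : Fin 2) n + Finsupp.single (1 : Fin 2) k) G = 0) :=
  Stmt14.final G hG
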